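/- Let S₀ be the cotangent lift of the inversion of ℝ³∖{0} with pole O and ratio l > 0, given by p = l·OM/‖OM‖², r = (‖OM‖²/l) W − (2 (W·OM)/l) OM. Then S₀ is an involution (applying the same formulas to (OM,W) ↦ (p,r) and again recovers (OM,W)), and the Kepler energy transforms as E ∘ S₀ = (l²/(2m‖W‖‖OM‖²))(‖W‖ − 2m²k/l). In particular E(r,p) = 0 if and only if ‖W‖ = 2km²/l. -/

import Mathlib

/-- The cotangent lift `S₀` of the inversion of `ℝ³∖{0}` with pole `O`
and ratio `l`, given by `p = l·OM/‖OM‖²`, `r = (‖OM‖²/l) W - (2(W·OM)/l) OM`,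
is an involution, and the Kepler energy transforms as
`E ∘ S₀ = (l²/(2m‖W‖‖OM‖²))(‖W‖ - 2m²k/l)`; in particular
`E(r,p) = 0 ↔ ‖W‖ = 2km²/l`. -/
theorem kepler_inversion_lift_involution_and_energy
    (m k l : ℝ) (hm : 0 < m) (hk : 0 < k) (hl : 0 < l)
    (OM W : EuclideanSpace ℝ (Fin 3)) (hOM : OM ≠ 0) (hW : W ≠ 0) :
    ∀ p r : EuclideanSpace ℝ (Fin 3),
      p = (l / ‖OM‖ ^ 2) • OM →
      r = (‖OM‖ ^ 2 / l) • W - (2 * (inner ℝ W OM : ℝ) / l) • OM →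
      -- `S₀` is an involution: applying the same formulas to `(p, r)` recovers `(OM, W)`
      ((l / ‖p‖ ^ 2) • p = OM ∧
       (‖p‖ ^ 2 / l) • r - (2 * (inner ℝ r p : ℝ) / l) • p = W) ∧
      -- transformed Hamiltonian
      (‖p‖ ^ 2 / (2 * m) - m * k / ‖r‖ =
        l ^ 2 / (2 * m * ‖W‖ * ‖OM‖ ^ 2) * (‖W‖ - 2 * m ^ 2 * k / l)) ∧
      -- zero-energy characterization
      (‖p‖ ^ 2 / (2 * m) - m * k / ‖r‖ = 0 ↔ ‖W‖ = 2 * k * m ^ 2 / l) := by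
  intro p r hp hr
  have hOMn : (0:ℝ) < ‖OM‖ := norm_pos_iff.mpr hOM
  have hWn : (0:ℝ) < ‖W‖ := norm_pos_iff.mpr hW
  set c : ℝ := (inner ℝ W OM : ℝ) with hc
  -- norm of p
  have hpn : ‖p‖ = l / ‖OM‖ := by
    rw [hp, norm_smul, Real.norm_eq_abs, abs_of_pos (by positivity)]
    field_simp
  have hp2 : ‖p‖ ^ 2 = l ^ 2 / ‖OM‖ ^ 2 := by
    rw [hpn]; ring
  -- norm of r
  have hr2 : ‖r‖ ^ 2 = (‖OM‖ ^ 2 * ‖W‖ / l) ^ 2 := by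
    have := norm_sub_sq_real ((‖OM‖ ^ 2 / l) • W) ((2 * c / l) • OM)
    rw [← hr] at this
    rw [this, norm_smul, norm_smul, real_inner_smul_left, real_inner_smul_right,
      Real.norm_eq_abs, Real.norm_eq_abs, ← hc]
    rw [mul_pow, mul_pow, sq_abs, sq_abs]
    field_simp
    ring
  have hrn : ‖r‖ = ‖OM‖ ^ 2 * ‖W‖ / l := by
    have h1 : (0:ℝ) ≤ ‖r‖ := norm_nonneg _
    have h2 : (0:ℝ) ≤ ‖OM‖ ^ 2 * ‖W‖ / l := by positivity
    nlinarith [hr2]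
  -- inner r p
  have hrp : (inner ℝ r p : ℝ) = -c := by
    rw [hr, hp, inner_sub_left, real_inner_smul_left, real_inner_smul_left,
      real_inner_smul_right, real_inner_smul_right, real_inner_self_eq_norm_sq,
      ]
    rw [← hc]
    field_simp
    ring
  refine ⟨⟨?_, ?_⟩, ?_, ?_⟩
  · rw [hp2, hp, smul_smul]
    rw [show l / (l ^ 2 / ‖OM‖ ^ 2) * (l / ‖OM‖ ^ 2) = 1 by field_simp, one_smul]
  · rw [hp2, hrp, hr, hp]
    match_scalars
    · field_simp
    · field_simp; ring
  · rw [hp2, hrn]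
    field_simp
  · rw [hp2, hrn]
    rw [show l ^ 2 / ‖OM‖ ^ 2 / (2 * m) - m * k / (‖OM‖ ^ 2 * ‖W‖ / l)
        = (l / (2 * m * ‖W‖ * ‖OM‖ ^ 2)) * (l * ‖W‖ - 2 * k * m ^ 2) by
      field_simp]
    constructor
    · intro h
      rcases mul_eq_zero.mp h with h | h
      · exfalso
        have : l / (2 * m * ‖W‖ * ‖OM‖ ^ 2) > 0 := by positivity
        linarith
      · field_simp
        linarith
    · intro h
      rw [h]
      field_simp
      ring
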